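/- Let p > −1. For all x > 0, the function R_p(x) = ∫₀^∞ t^p e^{−t²/2} e^{−xt} dt has the convergent power series representation R_p(x) = ∑_{k=0}^∞ ((−1)^k 2^{(k+p−1)/2} / k!) Γ((k+p+1)/2) x^k. -/

import Mathlib

open Real MeasureTheory Set

/-- The Mills ratio of order `p`: `R_p(x) = ∫₀^∞ t^p e^{-t²/2} e^{-xt} dt`. -/
noncomputable def millsR (p x : ℝ) : ℝ :=
  ∫ t in Set.Ioi (0 : ℝ), t ^ p * Real.exp (-t ^ 2 / 2) * Real.exp (-x * t)

private lemma gammaInt (q : ℝ) (hq : -1 < q) :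
    ∫ t in Set.Ioi (0 : ℝ), t ^ q * Real.exp (-t ^ 2 / 2)
      = (2 : ℝ) ^ ((q - 1) / 2) * Real.Gamma ((q + 1) / 2) := by
  have h := integral_rpow_mul_exp_neg_mul_rpow (p := 2) (q := q) (b := 1/2)
    two_pos hq (by norm_num)
  simp only [Real.rpow_two] at h
  have harg : ∀ t : ℝ, -(1/2 : ℝ) * t ^ 2 = -t ^ 2 / 2 := fun t => by ring
  simp only [harg] at h
  rw [h]
  have h2 : ((1:ℝ)/2) ^ (-(q + 1)/2) = (2:ℝ) ^ ((q + 1)/2) := by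
    rw [one_div, Real.inv_rpow (by norm_num : (0:ℝ) ≤ 2),
      ← Real.rpow_neg (by norm_num : (0:ℝ) ≤ 2)]
    congr 1
    ring
  have h3 : (2:ℝ) ^ ((q + 1)/2) * ((1:ℝ)/2) = (2:ℝ) ^ ((q - 1)/2) := by
    rw [show (1:ℝ)/2 = (2:ℝ) ^ (-1 : ℝ) by rw [Real.rpow_neg_one]; norm_num,
      ← Real.rpow_add two_pos]
    congr 1
    ring
  rw [h2, h3]

private lemma hExpSum : ∀ y : ℝ, HasSum (fun k : ℕ => y ^ k / (Nat.factorial k)) (Real.exp y) := by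
  intro y
  rw [Real.exp_eq_exp_ℝ]
  exact NormedSpace.expSeries_div_hasSum_exp y

theorem stmt19 (p : ℝ) (hp : -1 < p) (x : ℝ) (hx : 0 < x) :
    HasSum
      (fun k : ℕ =>
        (-1 : ℝ) ^ k * (2 : ℝ) ^ (((k : ℝ) + p - 1) / 2) / (Nat.factorial k) *
          Real.Gamma (((k : ℝ) + p + 1) / 2) * x ^ k)
      (millsR p x) := by
  set μ := volume.restrict (Set.Ioi (0 : ℝ)) with hμ
  set F : ℕ → ℝ → ℝ := fun k t =>
    t ^ p * Real.exp (-t ^ 2 / 2) * ((-x * t) ^ k / (Nat.factorial k)) with hF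
  set G : ℕ → ℝ → ℝ := fun k t =>
    t ^ p * Real.exp (-t ^ 2 / 2) * ((x * t) ^ k / (Nat.factorial k)) with hG
  have hqk : ∀ k : ℕ, (-1 : ℝ) < p + k := fun k => by
    have : (0:ℝ) ≤ k := Nat.cast_nonneg k
    linarith
  have hbase : ∀ k : ℕ, IntegrableOn
      (fun t : ℝ => t ^ (p + (k:ℝ)) * Real.exp (-(1/2 : ℝ) * t ^ 2)) (Set.Ioi 0) :=
    fun k => integrableOn_rpow_mul_exp_neg_mul_sq (by norm_num) (hqk k)
  -- pointwise identity on Ioi 0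
  have hFeq : ∀ k : ℕ, ∀ t ∈ Set.Ioi (0:ℝ),
      ((-x) ^ k / (Nat.factorial k)) * (t ^ (p + (k:ℝ)) * Real.exp (-(1/2 : ℝ) * t ^ 2))
        = F k t := by
    intro k t ht
    have ht' : (0:ℝ) < t := ht
    rw [hF]
    simp only
    rw [Real.rpow_add ht', Real.rpow_natCast, neg_mul, neg_pow, mul_pow]
    rw [show (-t ^ 2 / 2 : ℝ) = -(1/2 * t ^ 2) from by ring]
    ring
  have hGeq : ∀ k : ℕ, ∀ t ∈ Set.Ioi (0:ℝ),
      ((x) ^ k / (Nat.factorial k)) * (t ^ (p + (k:ℝ)) * Real.exp (-(1/2 : ℝ) * t ^ 2))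
        = G k t := by
    intro k t ht
    have ht' : (0:ℝ) < t := ht
    rw [hG]
    simp only
    rw [Real.rpow_add ht', Real.rpow_natCast, mul_pow]
    rw [show (-t ^ 2 / 2 : ℝ) = -(1/2 * t ^ 2) from by ring]
    ring
  have hF_int : ∀ k : ℕ, Integrable (F k) μ := by
    intro k
    refine (((hbase k).const_mul ((-x) ^ k / (Nat.factorial k))).congr ?_)
    filter_upwards [ae_restrict_mem measurableSet_Ioi] with t ht
    exact hFeq k t ht
  have hG_int : ∀ k : ℕ, Integrable (G k) μ := by
    intro k
    refine (((hbase k).const_mul ((x) ^ k / (Nat.factorial k))).congr ?_)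
    filter_upwards [ae_restrict_mem measurableSet_Ioi] with t ht
    exact hGeq k t ht
  have hG_nonneg : ∀ k : ℕ, ∀ t ∈ Set.Ioi (0:ℝ), 0 ≤ G k t := by
    intro k t ht
    have ht' : (0:ℝ) < t := ht
    rw [hG]
    have h1 : (0:ℝ) ≤ t ^ p := Real.rpow_nonneg ht'.le p
    have h2 : (0:ℝ) ≤ (x * t) ^ k := pow_nonneg (by positivity) k
    positivity
  have hnormG : ∀ k : ℕ, (∫ t, ‖F k t‖ ∂μ) = ∫ t, G k t ∂μ := by
    intro k
    apply integral_congr_ae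
    filter_upwards [ae_restrict_mem measurableSet_Ioi] with t ht
    have ht' : (0:ℝ) < t := ht
    rw [Real.norm_eq_abs, hF, hG]
    simp only
    rw [abs_mul, abs_mul, abs_div, abs_pow, neg_mul, abs_neg]
    rw [abs_of_nonneg (Real.rpow_nonneg ht'.le p), abs_of_nonneg (Real.exp_pos _).le,
      abs_of_nonneg (by positivity : (0:ℝ) ≤ x * t), Nat.abs_cast]
  -- the dominating function
  have hg_int : Integrable (fun t : ℝ => Real.exp (x ^ 2) *
      (t ^ p * Real.exp (-(1/4 : ℝ) * t ^ 2))) μ :=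
    (integrableOn_rpow_mul_exp_neg_mul_sq (by norm_num) hp).const_mul _
  have hbound : ∀ n : ℕ, ∀ t ∈ Set.Ioi (0:ℝ),
      ∑ k ∈ Finset.range n, G k t ≤ Real.exp (x ^ 2) *
        (t ^ p * Real.exp (-(1/4 : ℝ) * t ^ 2)) := by
    intro n t ht
    have ht' : (0:ℝ) < t := ht
    have h1 : (0:ℝ) ≤ t ^ p * Real.exp (-t ^ 2 / 2) := by positivity
    calc ∑ k ∈ Finset.range n, G k t
        = t ^ p * Real.exp (-t ^ 2 / 2) *
            ∑ k ∈ Finset.range n, (x * t) ^ k / (Nat.factorial k) := by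
          rw [Finset.mul_sum]
      _ ≤ t ^ p * Real.exp (-t ^ 2 / 2) * Real.exp (x * t) :=
          mul_le_mul_of_nonneg_left (Real.sum_le_exp_of_nonneg (by positivity) n) h1
      _ = t ^ p * Real.exp (x * t - t ^ 2 / 2) := by
          rw [mul_assoc, ← Real.exp_add]; ring_nf
      _ ≤ t ^ p * Real.exp (x ^ 2 + -(1/4 : ℝ) * t ^ 2) := by
          apply mul_le_mul_of_nonneg_left _ (Real.rpow_nonneg ht'.le p)
          apply Real.exp_le_exp.mpr
          nlinarith [sq_nonneg (x - t / 2)]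
      _ = Real.exp (x ^ 2) * (t ^ p * Real.exp (-(1/4 : ℝ) * t ^ 2)) := by
          rw [Real.exp_add]; ring
  have hsumG : Summable (fun k : ℕ => ∫ t, G k t ∂μ) := by
    apply summable_of_sum_range_le (c := ∫ t, Real.exp (x ^ 2) *
      (t ^ p * Real.exp (-(1/4 : ℝ) * t ^ 2)) ∂μ)
    · intro k
      apply integral_nonneg_of_ae
      filter_upwards [ae_restrict_mem measurableSet_Ioi] with t ht
      exact hG_nonneg k t ht
    · intro n
      rw [← integral_finset_sum _ (fun k _ => hG_int k)]
      apply integral_mono_ae (integrable_finset_sum _ (fun k _ => hG_int k)) hg_int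
      filter_upwards [ae_restrict_mem measurableSet_Ioi] with t ht
      exact hbound n t ht
  have hsum : Summable (fun k : ℕ => ∫ t, ‖F k t‖ ∂μ) := by
    simpa only [hnormG] using hsumG
  have key := hasSum_integral_of_summable_integral_norm hF_int hsum
  -- identify the sum of the series pointwise
  have htsum : ∀ t : ℝ, (∑' k, F k t) = t ^ p * Real.exp (-t ^ 2 / 2) * Real.exp (-x * t) := by
    intro t
    exact ((hExpSum (-x * t)).mul_left (t ^ p * Real.exp (-t ^ 2 / 2))).tsum_eq
  have hmills : (∫ t, (∑' k, F k t) ∂μ) = millsR p x := by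
    rw [millsR]
    exact integral_congr_ae (Filter.Eventually.of_forall fun t => htsum t)
  rw [hmills] at key
  -- identify each coefficient
  have hval : ∀ k : ℕ, (∫ t, F k t ∂μ) =
      (-1 : ℝ) ^ k * (2 : ℝ) ^ (((k : ℝ) + p - 1) / 2) / (Nat.factorial k) *
        Real.Gamma (((k : ℝ) + p + 1) / 2) * x ^ k := by
    intro k
    have h1 : (∫ t, F k t ∂μ) = ∫ t in Set.Ioi (0:ℝ),
        ((-x) ^ k / (Nat.factorial k)) *
          (t ^ (p + (k:ℝ)) * Real.exp (-(1/2 : ℝ) * t ^ 2)) := by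
      rw [hμ]
      exact (setIntegral_congr_fun measurableSet_Ioi (fun t ht => (hFeq k t ht).symm))
    rw [h1, integral_const_mul]
    have h2 : ∀ t : ℝ, -(1/2 : ℝ) * t ^ 2 = -t ^ 2 / 2 := fun t => by ring
    simp only [h2]
    rw [gammaInt (p + (k:ℝ)) (hqk k)]
    rw [neg_pow]
    have e1 : p + (k:ℝ) - 1 = (k:ℝ) + p - 1 := by ring
    have e2 : p + (k:ℝ) + 1 = (k:ℝ) + p + 1 := by ring
    rw [e1, e2]
    ring
  rwa [show (fun k : ℕ => ∫ t, F k t ∂μ) = _ from funext hval] at key
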